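/- Suppose m : Ω → ℝ^d satisfies (∇p ⊗ ∇p)m = ν|m|^{2(γ−1)}m pointwise on a measurable set A where m ≠ 0, with γ > 1, ν > 0. Then there exist disjoint measurable sets A⁺, A⁻ with A⁺ ∪ A⁻ = A such that ∇p = (χ_{A⁺} − χ_{A⁻}) √ν |m|^{γ−2} m on A. -/
import Mathlib


open MeasureTheory
open scoped RealInnerProductSpace

/-- If `(∇p ⊗ ∇p) m = ν |m|^(2(γ−1)) m` holds pointwise on a measurable set `A` where
`m ≠ 0` (with `γ > 1`, `ν > 0`), then there exist disjoint measurable sets `A⁺, A⁻` with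
`A⁺ ∪ A⁻ = A` such that `∇p = (χ_{A⁺} − χ_{A⁻}) √ν |m|^(γ−2) m` on `A`. -/
theorem decomposition_sign_sets_vector
    (d : ℕ) (Ω A : Set (EuclideanSpace ℝ (Fin d)))
    (hA : MeasurableSet A) (hAΩ : A ⊆ Ω)
    (ν γ : ℝ) (hν : 0 < ν) (hγ : 1 < γ)
    (p : EuclideanSpace ℝ (Fin d) → ℝ)
    (hp : ∀ x ∈ Ω, DifferentiableAt ℝ p x)
    (hpgradmeas : Measurable (fun x => gradient p x))
    (m : EuclideanSpace ℝ (Fin d) → EuclideanSpace ℝ (Fin d))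
    (hmmeas : Measurable m)
    (hm0 : ∀ x ∈ A, m x ≠ 0)
    (hEL : ∀ x ∈ A,
      ⟪gradient p x, m x⟫ • gradient p x = (ν * ‖m x‖ ^ (2 * (γ - 1))) • m x) :
    ∃ Ap Am : Set (EuclideanSpace ℝ (Fin d)),
      MeasurableSet Ap ∧ MeasurableSet Am ∧ Disjoint Ap Am ∧ Ap ∪ Am = A ∧
      ∀ x ∈ A, gradient p x
        = ((Set.indicator Ap (fun _ => (1 : ℝ)) x
            - Set.indicator Am (fun _ => (1 : ℝ)) x)
          * (Real.sqrt ν * ‖m x‖ ^ (γ - 2))) • m x := by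
  classical
  set f : EuclideanSpace ℝ (Fin d) → ℝ := fun x => ⟪gradient p x, m x⟫ with hf_def
  have hf : Measurable f := hpgradmeas.inner hmmeas
  refine ⟨A ∩ {x | 0 < f x}, A ∩ {x | f x ≤ 0}, hA.inter (hf measurableSet_Ioi),
    hA.inter (hf measurableSet_Iic), ?_, ?_, ?_⟩
  · refine Set.disjoint_left.mpr fun x hx hx' => ?_
    have h1 : 0 < f x := hx.2
    have h2 : f x ≤ 0 := hx'.2
    linarith
  · ext x
    constructor
    · rintro (⟨h, _⟩ | ⟨h, _⟩) <;> exact h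
    · intro hx
      by_cases h : 0 < f x
      · exact Or.inl ⟨hx, h⟩
      · exact Or.inr ⟨hx, not_lt.mp h⟩
  · intro x hx
    have hv : m x ≠ 0 := hm0 x hx
    have hvn : 0 < ‖m x‖ := norm_pos_iff.mpr hv
    set g := gradient p x with hg_def
    set v := m x with hv_def
    set t := f x with ht_def
    set c := ν * ‖v‖ ^ (2 * (γ - 1)) with hc_def
    have hc : 0 < c := mul_pos hν (Real.rpow_pos_of_pos hvn _)
    have hEL' : t • g = c • v := hEL x hx
    have ht : t ≠ 0 := by
      intro h0
      rw [h0, zero_smul] at hEL'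
      rcases smul_eq_zero.mp hEL'.symm with h | h
      · exact hc.ne' h
      · exact hv h
    have hg : g = (t⁻¹ * c) • v := by
      have := congrArg (fun y => t⁻¹ • y) hEL'
      simpa [smul_smul, inv_mul_cancel₀ ht] using this
    have htc : t = (t⁻¹ * c) * ‖v‖ ^ 2 := by
      have : ⟪g, v⟫ = (t⁻¹ * c) * ⟪v, v⟫ := by
        rw [hg, real_inner_smul_left]
      rw [real_inner_self_eq_norm_sq] at this
      exact this
    set s := Real.sqrt ν * ‖v‖ ^ (γ - 2) with hs_def
    have hs : 0 < s := mul_pos (Real.sqrt_pos.mpr hν) (Real.rpow_pos_of_pos hvn _)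
    -- key square identity: s^2 * ‖v‖^2 = c
    have hkey : s ^ 2 * ‖v‖ ^ 2 = c := by
      have h1 : Real.sqrt ν ^ 2 = ν := Real.sq_sqrt hν.le
      have h2 : (‖v‖ ^ (γ - 2)) ^ 2 * ‖v‖ ^ 2 = ‖v‖ ^ (2 * (γ - 1)) := by
        rw [← Real.rpow_natCast (‖v‖ ^ (γ - 2)) 2, ← Real.rpow_mul hvn.le,
          ← Real.rpow_natCast ‖v‖ 2, ← Real.rpow_add hvn]
        norm_num
        ring_nf
      rw [hs_def, mul_pow, h1, hc_def, mul_assoc, h2]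
    -- squares of t⁻¹ * c and s agree
    have hsq : (t⁻¹ * c) ^ 2 = s ^ 2 := by
      have ht2 : t ^ 2 = c * ‖v‖ ^ 2 := by
        calc t ^ 2 = t * t := sq t
        _ = t * (t⁻¹ * c * ‖v‖ ^ 2) := by rw [← htc]
        _ = (t * t⁻¹) * (c * ‖v‖ ^ 2) := by ring
        _ = c * ‖v‖ ^ 2 := by rw [mul_inv_cancel₀ ht, one_mul]
      have hvne : (‖v‖ ^ 2 : ℝ) ≠ 0 := by positivity
      have h1 : (t⁻¹ * c) ^ 2 * (c * ‖v‖ ^ 2) = c ^ 2 := by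
        rw [← ht2]
        field_simp
      have h2 : c * ((t⁻¹ * c) ^ 2 * ‖v‖ ^ 2) = c * c := by
        linear_combination h1
      have h3 : (t⁻¹ * c) ^ 2 * ‖v‖ ^ 2 = c := by
        have := mul_left_cancel₀ hc.ne' h2
        linarith [this]
      exact mul_right_cancel₀ hvne (h3.trans hkey.symm)
    have habs : |t⁻¹ * c| = s := by
      rw [← Real.sqrt_sq_eq_abs, hsq, Real.sqrt_sq hs.le]
    by_cases hpos : 0 < t
    · have hmem : x ∈ A ∩ {x | 0 < f x} := ⟨hx, hpos⟩
      have hnmem : x ∉ A ∩ {x | f x ≤ 0} := fun h => (not_lt.mpr h.2) hpos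
      have htcpos : 0 < t⁻¹ * c := mul_pos (inv_pos.mpr hpos) hc
      rw [Set.indicator_of_mem hmem, Set.indicator_of_notMem hnmem]
      rw [hg]
      congr 1
      rw [← habs, abs_of_pos htcpos]
      ring
    · have hmem : x ∈ A ∩ {x | f x ≤ 0} := ⟨hx, not_lt.mp hpos⟩
      have hnmem : x ∉ A ∩ {x | 0 < f x} := fun h => hpos h.2
      have htneg : t < 0 := lt_of_le_of_ne (not_lt.mp hpos) ht
      have htcneg : t⁻¹ * c < 0 := mul_neg_of_neg_of_pos (inv_neg''.mpr htneg) hc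
      rw [Set.indicator_of_notMem hnmem, Set.indicator_of_mem hmem]
      rw [hg]
      congr 1
      rw [← habs, abs_of_neg htcneg]
      ring
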